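/- Let r ≥ 2 be an integer and let (p_k)_{k≥r} be a probability mass function on the integers k ≥ r with finite mean b = ∑_{k≥r} k·p_k (so b ≥ r). Then p_c := 1 - 1/(max_{x∈[0,1]} G^r(x)) satisfies p_c ≥ exp(-(r-2)/(r-1)) · e^{-b/(r-1)} / b, where G^r(x) = ∑_{k≥r} p_k · g_k^r(x). -/

import Mathlib

open MeasureTheory Finset

/-- The polynomial `g_k^r(x) = ∑_{i=0}^{r-1} C(k,i) x^(k-i-1) (1-x)^i`. -/
noncomputable def g (r k : ℕ) (x : ℝ) : ℝ :=
  ∑ i ∈ Finset.range r, (k.choose i : ℝ) * x ^ (k - i - 1) * (1 - x) ^ i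

/-- the tail polynomial `R r k ε = (1 - (1-ε)·g r k (1-ε))/ε²` -/
noncomputable def R (r k : ℕ) (ε : ℝ) : ℝ :=
  ∑ i ∈ Finset.Ico r (k+1), (k.choose i : ℝ) * ε ^ (i - 2) * (1 - ε) ^ (k - i)

lemma key_identity (r k : ℕ) (hr : 2 ≤ r) (hk : r ≤ k) (ε : ℝ) :
    ε ^ 2 * R r k ε + (1 - ε) * g r k (1 - ε) = 1 := by
  have h1 : ε ^ 2 * R r k ε = ∑ i ∈ Finset.Ico r (k+1),
      (k.choose i : ℝ) * ε ^ i * (1 - ε) ^ (k - i) := by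
    rw [R, Finset.mul_sum]
    refine Finset.sum_congr rfl fun i hi => ?_
    have h2i : 2 ≤ i := le_trans hr (Finset.mem_Ico.1 hi).1
    have : ε ^ 2 * ε ^ (i - 2) = ε ^ i := by
      rw [← pow_add]; congr 1; omega
    calc ε ^ 2 * ((k.choose i : ℝ) * ε ^ (i-2) * (1 - ε) ^ (k - i))
        = (k.choose i : ℝ) * (ε ^ 2 * ε ^ (i-2)) * (1 - ε) ^ (k-i) := by ring
      _ = (k.choose i : ℝ) * ε ^ i * (1-ε) ^ (k-i) := by rw [this]
  have h2 : (1 - ε) * g r k (1 - ε) = ∑ i ∈ Finset.range r,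
      (k.choose i : ℝ) * ε ^ i * (1 - ε) ^ (k - i) := by
    rw [g, Finset.mul_sum]
    refine Finset.sum_congr rfl fun i hi => ?_
    have hik : i < r := Finset.mem_range.1 hi
    have : (1 - ε) * (1 - ε) ^ (k - i - 1) = (1 - ε) ^ (k - i) := by
      rw [← pow_succ']; congr 1; omega
    have h1ε : (1 - (1 - ε)) = ε := by ring
    rw [h1ε]
    calc (1-ε) * ((k.choose i : ℝ) * (1-ε) ^ (k - i - 1) * ε ^ i)
        = (k.choose i : ℝ) * ((1-ε) * (1-ε) ^ (k-i-1)) * ε ^ i := by ring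
      _ = (k.choose i : ℝ) * ε ^ i * (1-ε) ^ (k-i) := by rw [this]; ring
  rw [h1, h2, add_comm, Finset.sum_range_add_sum_Ico _ (le_trans hk (Nat.le_succ k))]
  have h3 := add_pow ε (1 - ε) k
  simp only [add_sub_cancel, one_pow] at h3
  have h4 : ∑ i ∈ Finset.range (k+1), (k.choose i:ℝ) * ε ^ i * (1-ε)^(k-i)
      = ∑ m ∈ Finset.range (k+1), ε ^ m * (1 - ε) ^ (k - m) * (k.choose m : ℝ) :=
    Finset.sum_congr rfl fun i _ => by ring
  rw [show k.succ = k + 1 from rfl, h4, ← h3]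

lemma nat_prod_fact (m n : ℕ) :
    m.factorial * ∏ j ∈ Finset.range (n+1), (m+1+j) = (m+n+1).factorial := by
  induction n with
  | zero => simp [Nat.factorial_succ, mul_comm]
  | succ n ih =>
    rw [Finset.prod_range_succ, ← mul_assoc, ih]
    have : m + (n+1) + 1 = (m + n + 1) + 1 := by omega
    rw [this, Nat.factorial_succ, mul_comm]
    congr 1
    omega

lemma beta_nat (m n : ℕ) : (∫ x in (0:ℝ)..1, x ^ m * (1-x) ^ n)
    = (m.factorial * n.factorial : ℝ) / (m+n+1).factorial := by
  have hu : 0 < Complex.re ((m:ℂ)+1) := by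
    simp only [Complex.add_re, Complex.natCast_re, Complex.one_re]
    positivity
  have h := Complex.betaIntegral_eval_nat_add_one_right hu n
  rw [Complex.betaIntegral] at h
  have hint : (∫ x in (0:ℝ)..1, (x:ℂ) ^ ((m:ℂ)+1-1) * (1-(x:ℂ)) ^ ((n:ℂ)+1-1))
      = ((∫ x in (0:ℝ)..1, x ^ m * (1-x) ^ n : ℝ) : ℂ) := by
    rw [← intervalIntegral.integral_ofReal]
    refine intervalIntegral.integral_congr fun x _ => ?_
    rw [add_sub_cancel_right, add_sub_cancel_right]
    rw [Complex.cpow_natCast, Complex.cpow_natCast]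
    push_cast
    ring
  rw [hint] at h
  have hprod : (∏ j ∈ Finset.range (n+1), ((m:ℂ)+1+(j:ℂ)))
      = ((∏ j ∈ Finset.range (n+1), (m+1+j) : ℕ) : ℂ) := by
    push_cast
    ring_nf
  rw [hprod] at h
  have hP : (0:ℕ) < ∏ j ∈ Finset.range (n+1), (m+1+j) :=
    Finset.prod_pos fun j _ => by omega
  have hfact := nat_prod_fact m n
  have : ((∫ x in (0:ℝ)..1, x ^ m * (1-x) ^ n : ℝ) : ℂ)
      = (((n.factorial : ℝ) / (∏ j ∈ Finset.range (n+1), (m+1+j) : ℕ) : ℝ) : ℂ) := by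
    rw [h]; push_cast; ring
  have heq := Complex.ofReal_inj.1 this
  rw [heq]
  rw [div_eq_div_iff]
  · have : ((m+n+1).factorial : ℝ) = (m.factorial : ℝ) * (∏ j ∈ Finset.range (n+1), (m+1+j) : ℕ) := by
      rw [← hfact]; push_cast; ring
    rw [this]; ring
  · exact Nat.cast_ne_zero.2 hP.ne'
  · exact Nat.cast_ne_zero.2 (m+n+1).factorial_pos.ne'

lemma choose_beta (k i : ℕ) (h2 : 2 ≤ i) (hik : i ≤ k) :
    (k.choose i : ℝ) * (((i-2).factorial * (k-i).factorial : ℕ) : ℝ) / ((k-1).factorial : ℝ)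
      = (k:ℝ) / (((i:ℝ)-1) * i) := by
  have hk1 : 1 ≤ k := le_trans (le_trans one_le_two h2) hik
  have e1 : (i-1) * (i-2).factorial = (i-1).factorial := by
    rw [show i - 1 = (i-2) + 1 by omega, Nat.factorial_succ]
  have e2 : i * (i-1).factorial = i.factorial := by
    conv_rhs => rw [show i = (i-1) + 1 by omega]
    rw [Nat.factorial_succ, show i-1+1 = i by omega]
  have e3 : k * (k-1).factorial = k.factorial := by
    conv_rhs => rw [show k = (k-1) + 1 by omega]
    rw [Nat.factorial_succ, show k-1+1 = k by omega]
  have natid : k.choose i * ((i-2).factorial * (k-i).factorial) * ((i-1) * i)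
      = k * (k-1).factorial := by
    rw [e3, ← Nat.choose_mul_factorial_mul_factorial hik, ← e2, ← e1]
    ring
  have hi1 : ((i:ℝ)-1) = ((i-1 : ℕ) : ℝ) := by
    rw [Nat.cast_sub (by omega : 1 ≤ i)]; norm_num
  have hne1 : ((k-1).factorial : ℝ) ≠ 0 := by positivity
  have hne2 : (((i-1:ℕ):ℝ) * i) ≠ 0 := by
    have : (0:ℕ) < i - 1 := by omega
    have h1 : (0:ℝ) < ((i-1:ℕ):ℝ) := by exact_mod_cast this
    have h2 : (0:ℝ) < (i:ℝ) := by positivity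
    positivity
  rw [hi1, div_eq_div_iff hne1 hne2]
  have h := congrArg (fun n : ℕ => (n : ℝ)) natid
  push_cast at h ⊢
  linear_combination h

lemma telescope (r : ℕ) (hr : 2 ≤ r) : ∀ k, r ≤ k →
    ∑ i ∈ Finset.Ico r (k+1), (1:ℝ)/(((i:ℝ)-1)*i) = 1/((r:ℝ)-1) - 1/(k:ℝ) := by
  refine Nat.le_induction ?_ ?_
  · rw [Finset.sum_Ico_succ_top (le_refl r), Finset.Ico_self, Finset.sum_empty, zero_add]
    have h1 : ((r:ℝ)-1) ≠ 0 := by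
      have : (2:ℝ) ≤ r := by exact_mod_cast hr
      intro h; nlinarith
    have h2 : (r:ℝ) ≠ 0 := by positivity
    field_simp
    ring
  · intro k hk ih
    rw [Finset.sum_Ico_succ_top (by omega : r ≤ k+1), ih]
    have h2 : (k:ℝ) ≠ 0 := by
      have : (2:ℝ) ≤ k := by exact_mod_cast le_trans hr hk
      intro h; nlinarith
    have h3 : ((k:ℝ)+1) ≠ 0 := by positivity
    have h1 : ((r:ℝ)-1) ≠ 0 := by
      have : (2:ℝ) ≤ r := by exact_mod_cast hr
      intro h; nlinarith
    push_cast
    rw [show ((k:ℝ)+1-1) = k by ring]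
    field_simp
    ring

lemma integral_R (r k : ℕ) (hr : 2 ≤ r) (hk : r ≤ k) :
    (∫ x in (0:ℝ)..1, R r k x) = (k:ℝ)/((r:ℝ)-1) - 1 := by
  have hcont : ∀ i : ℕ, Continuous (fun x : ℝ => (k.choose i : ℝ) * x ^ (i-2) * (1-x) ^ (k-i)) :=
    fun i => (continuous_const.mul (continuous_pow _)).mul
      ((continuous_const.sub continuous_id).pow _)
  have hsplit : (∫ x in (0:ℝ)..1, R r k x)
      = ∑ i ∈ Finset.Ico r (k+1), ∫ x in (0:ℝ)..1,
          (k.choose i : ℝ) * x ^ (i-2) * (1-x) ^ (k-i) := by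
    rw [show (fun x : ℝ => R r k x) = fun x : ℝ => ∑ i ∈ Finset.Ico r (k+1),
        (k.choose i : ℝ) * x ^ (i-2) * (1-x) ^ (k-i) from rfl]
    exact intervalIntegral.integral_finset_sum
      (fun i _ => (hcont i).intervalIntegrable 0 1)
  rw [hsplit]
  have hterm : ∀ i ∈ Finset.Ico r (k+1), (∫ x in (0:ℝ)..1,
      (k.choose i : ℝ) * x ^ (i-2) * (1-x) ^ (k-i)) = (k:ℝ) * (1/(((i:ℝ)-1)*i)) := by
    intro i hi
    obtain ⟨hi1, hi2⟩ := Finset.mem_Ico.1 hi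
    have h2i : 2 ≤ i := le_trans hr hi1
    have hik : i ≤ k := by omega
    have : (fun x : ℝ => (k.choose i : ℝ) * x ^ (i-2) * (1-x) ^ (k-i))
        = fun x : ℝ => (k.choose i : ℝ) * (x ^ (i-2) * (1-x) ^ (k-i)) :=
      funext fun x => by ring
    rw [this, intervalIntegral.integral_const_mul, beta_nat,
      show (i-2) + (k-i) + 1 = k-1 by omega]
    have := choose_beta k i h2i hik
    push_cast at this ⊢
    rw [mul_div_assoc] at this
    rw [this]
    ring
  rw [Finset.sum_congr rfl hterm, ← Finset.mul_sum, telescope r hr k hk]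
  have h2 : (k:ℝ) ≠ 0 := by
    have : (2:ℝ) ≤ k := by exact_mod_cast le_trans hr hk
    intro h; nlinarith
  field_simp

lemma g_nonneg (r k : ℕ) {x : ℝ} (hx : x ∈ Set.Icc (0:ℝ) 1) : 0 ≤ g r k x :=
  Finset.sum_nonneg fun i _ => mul_nonneg
    (mul_nonneg (Nat.cast_nonneg _) (pow_nonneg hx.1 _)) (pow_nonneg (by linarith [hx.2]) _)

lemma choose_le (r k i : ℕ) (hr : 1 ≤ r) (hk : r ≤ k) (hi : i < r) :
    k.choose i ≤ r * (k-1).choose i := by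
  have hik : i < k := lt_of_lt_of_le hi hk
  have hkc : k * (k-1).choose i = k.choose i * (k - i) := by
    have h := Nat.add_one_mul_choose_eq (k-1) i
    rw [show (k-1)+1 = k by omega] at h
    rw [h, Nat.choose_succ_right_eq]
  have hkle : k ≤ r * (k - i) := by
    have hj : 1 ≤ k - i := by omega
    calc k = i + (k - i) := by omega
      _ ≤ i * (k-i) + (k-i) := by nlinarith
      _ = (i+1) * (k-i) := by ring
      _ ≤ r * (k-i) := Nat.mul_le_mul_right _ (by omega)
  have : k.choose i * (k - i) ≤ (r * (k-1).choose i) * (k - i) := by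
    rw [← hkc]
    calc k * (k-1).choose i ≤ (r * (k-i)) * (k-1).choose i :=
          Nat.mul_le_mul_right _ hkle
      _ = (r * (k-1).choose i) * (k - i) := by ring
  exact Nat.le_of_mul_le_mul_right this (by omega)

lemma g_le (r k : ℕ) (hr : 1 ≤ r) (hk : r ≤ k) {x : ℝ} (hx : x ∈ Set.Icc (0:ℝ) 1) :
    g r k x ≤ r := by
  have hx0 := hx.1
  have hx1 : 0 ≤ 1 - x := by linarith [hx.2]
  have hterm : ∀ i ∈ Finset.range r, (k.choose i : ℝ) * x ^ (k - i - 1) * (1-x) ^ i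
      ≤ (r:ℝ) * (((k-1).choose i : ℝ) * x ^ (k-1-i) * (1-x) ^ i) := by
    intro i hi
    have hi' : i < r := Finset.mem_range.1 hi
    have hcast : (k.choose i : ℝ) ≤ (r:ℝ) * ((k-1).choose i : ℝ) := by
      exact_mod_cast choose_le r k i hr hk hi'
    have hee : k - i - 1 = k - 1 - i := by omega
    rw [hee]
    have hnn : (0:ℝ) ≤ x ^ (k-1-i) * (1-x) ^ i :=
      mul_nonneg (pow_nonneg hx0 _) (pow_nonneg hx1 _)
    calc (k.choose i : ℝ) * x ^ (k-1-i) * (1-x) ^ i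
        = (k.choose i : ℝ) * (x ^ (k-1-i) * (1-x) ^ i) := by ring
      _ ≤ ((r:ℝ) * ((k-1).choose i : ℝ)) * (x ^ (k-1-i) * (1-x) ^ i) :=
          mul_le_mul_of_nonneg_right hcast hnn
      _ = (r:ℝ) * (((k-1).choose i : ℝ) * x ^ (k-1-i) * (1-x) ^ i) := by ring
  calc g r k x ≤ ∑ i ∈ Finset.range r, (r:ℝ) * (((k-1).choose i : ℝ) * x ^ (k-1-i) * (1-x) ^ i) :=
        Finset.sum_le_sum hterm
    _ = (r:ℝ) * ∑ i ∈ Finset.range r, (((k-1).choose i : ℝ) * x ^ (k-1-i) * (1-x) ^ i) := by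
        rw [Finset.mul_sum]
    _ ≤ (r:ℝ) * ∑ i ∈ Finset.range ((k-1)+1), (((k-1).choose i : ℝ) * x ^ (k-1-i) * (1-x) ^ i) := by
        refine mul_le_mul_of_nonneg_left ?_ (Nat.cast_nonneg r)
        refine Finset.sum_le_sum_of_subset_of_nonneg ?_ ?_
        · exact Finset.range_subset_range.2 (by omega)
        · intro i _ _
          exact mul_nonneg (mul_nonneg (Nat.cast_nonneg _) (pow_nonneg hx0 _)) (pow_nonneg hx1 _)
    _ = (r:ℝ) * 1 := by
        congr 1
        have h3 := add_pow (1-x) x (k-1)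
        simp only [sub_add_cancel, one_pow] at h3
        have h4 : ∑ i ∈ Finset.range ((k-1)+1), (((k-1).choose i : ℝ) * x ^ (k-1-i) * (1-x) ^ i)
            = ∑ i ∈ Finset.range ((k-1)+1), (1-x) ^ i * x ^ (k-1-i) * ((k-1).choose i : ℝ) :=
          Finset.sum_congr rfl fun i _ => by ring
        rw [h4, ← h3]
    _ = r := mul_one _

lemma R_nonneg (r k : ℕ) {ε : ℝ} (hε : ε ∈ Set.Icc (0:ℝ) 1) : 0 ≤ R r k ε :=
  Finset.sum_nonneg fun i _ => mul_nonneg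
    (mul_nonneg (Nat.cast_nonneg _) (pow_nonneg hε.1 _)) (pow_nonneg (by linarith [hε.2]) _)

lemma R_cont (r k : ℕ) : Continuous (R r k) :=
  continuous_finset_sum _ fun i _ => (continuous_const.mul (continuous_pow _)).mul
    ((continuous_const.sub continuous_id).pow _)


set_option maxHeartbeats 2000000 in
/-- For an offspring distribution `(p_k)_{k ≥ r}` with finite mean `b`, the
critical probability `p_c = 1 - 1/(max_{x∈[0,1]} G^r(x))` of the Galton–Watson tree satisfies
`p_c ≥ exp(-(r-2)/(r-1)) · e^{-b/(r-1)} / b`, where `G^r(x) = ∑_{k≥r} p_k g_k^r(x)`. -/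
theorem pc_lower_bound (r : ℕ) (hr : 2 ≤ r) (p : ℕ → ℝ)
    (hp0 : ∀ k, k < r → p k = 0) (hpnn : ∀ k, 0 ≤ p k) (hsum : ∑' k : ℕ, p k = 1)
    (hmean : Summable fun k : ℕ => (k : ℝ) * p k)
    (b : ℝ) (hb : ∑' k : ℕ, (k : ℝ) * p k = b) :
    Real.exp (-((r : ℝ) - 2) / ((r : ℝ) - 1)) * Real.exp (-b / ((r : ℝ) - 1)) / b ≤
      1 - 1 / sSup ((fun x => ∑' k : ℕ, p k * g r k x) '' Set.Icc (0 : ℝ) 1) := by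
  classical
  have hrR : (2:ℝ) ≤ (r:ℝ) := by exact_mod_cast hr
  have hr1pos : (0:ℝ) < (r:ℝ) - 1 := by linarith
  have hPsum : Summable p := by
    by_contra h
    rw [tsum_eq_zero_of_not_summable h] at hsum
    norm_num at hsum
  have hbr : (r:ℝ) ≤ b := by
    have hle : ∀ k : ℕ, (r:ℝ) * p k ≤ (k:ℝ) * p k := by
      intro k
      rcases lt_or_ge k r with h|h
      · rw [hp0 k h]; simp
      · exact mul_le_mul_of_nonneg_right (by exact_mod_cast h) (hpnn k)
    calc (r:ℝ) = (r:ℝ) * ∑' k, p k := by rw [hsum, mul_one]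
      _ = ∑' k, (r:ℝ) * p k := (tsum_mul_left : ∑' (k:ℕ), (r:ℝ) * p k = _).symm
      _ ≤ ∑' (k:ℕ), (k:ℝ) * p k := Summable.tsum_le_tsum hle (hPsum.mul_left _) hmean
      _ = b := hb
  have hb2 : (2:ℝ) ≤ b := le_trans hrR hbr
  have hbpos : (0:ℝ) < b := by linarith
  set c : ℝ := Real.exp (-(b + (r:ℝ) - 2)/((r:ℝ)-1)) / b with hc
  have hcpos : 0 < c := by positivity
  have hexple : Real.exp (-(b + (r:ℝ) - 2)/((r:ℝ)-1)) ≤ 1 := by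
    rw [Real.exp_le_one_iff]
    apply div_nonpos_of_nonpos_of_nonneg <;> linarith
  have hcb : c * b = Real.exp (-(b + (r:ℝ) - 2)/((r:ℝ)-1)) := by
    rw [hc, div_mul_cancel₀ _ (ne_of_gt hbpos)]
  have hchalf : c ≤ 1/2 := by nlinarith
  have hc1 : c < 1 := by linarith
  -- summability of p·g
  have hpg_nonneg : ∀ x ∈ Set.Icc (0:ℝ) 1, ∀ k : ℕ, 0 ≤ p k * g r k x :=
    fun x hx k => mul_nonneg (hpnn k) (g_nonneg r k hx)
  have hpg_le : ∀ x ∈ Set.Icc (0:ℝ) 1, ∀ k : ℕ, p k * g r k x ≤ (r:ℝ) * p k := by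
    intro x hx k
    rcases lt_or_ge k r with h|h
    · rw [hp0 k h]; simp
    · calc p k * g r k x ≤ p k * (r:ℝ) :=
            mul_le_mul_of_nonneg_left (g_le r k (by omega) h hx) (hpnn k)
        _ = (r:ℝ) * p k := mul_comm _ _
  have hSg : ∀ x ∈ Set.Icc (0:ℝ) 1, Summable fun k => p k * g r k x := fun x hx =>
    Summable.of_nonneg_of_le (hpg_nonneg x hx) (hpg_le x hx) (hPsum.mul_left _)
  set G : ℝ → ℝ := fun x => ∑' k : ℕ, p k * g r k x with hGdef
  -- R summability
  have hRle : ∀ (k : ℕ), r ≤ k → ∀ ε ∈ Set.Ioc (0:ℝ) 1, R r k ε ≤ 1/ε^2 := by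
    intro k hk ε hε
    have hε0 : 0 < ε := hε.1
    have hgε : 0 ≤ (1-ε) * g r k (1-ε) :=
      mul_nonneg (by linarith [hε.2]) (g_nonneg r k ⟨by linarith [hε.2], by linarith [hε.1]⟩)
    have hkey := key_identity r k hr hk ε
    rw [le_div_iff₀ (by positivity), mul_comm]
    nlinarith
  have hSR : ∀ ε ∈ Set.Ioc (0:ℝ) 1, Summable fun k => p k * R r k ε := by
    intro ε hε
    refine Summable.of_nonneg_of_le
      (fun k => mul_nonneg (hpnn k) (R_nonneg r k ⟨le_of_lt hε.1, hε.2⟩))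
      (fun k => ?_) (hPsum.mul_left (1/ε^2))
    rcases lt_or_ge k r with h|h
    · rw [hp0 k h]; simp
    · calc p k * R r k ε ≤ p k * (1/ε^2) :=
            mul_le_mul_of_nonneg_left (hRle k h ε hε) (hpnn k)
        _ = (1/ε^2) * p k := mul_comm _ _
  set T : ℝ → ℝ := fun ε => ∑' k : ℕ, p k * R r k ε with hTdef
  -- identity
  have hGT : ∀ ε ∈ Set.Ioc (0:ℝ) 1, (1-ε) * G (1-ε) = 1 - ε^2 * T ε := by
    intro ε hε
    have hx : (1-ε) ∈ Set.Icc (0:ℝ) 1 := ⟨by linarith [hε.2], by linarith [hε.1]⟩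
    have h1 : (1-ε) * G (1-ε) = ∑' k : ℕ, (1-ε) * (p k * g r k (1-ε)) := tsum_mul_left.symm
    have h2 : ∀ k : ℕ, (1-ε) * (p k * g r k (1-ε)) = p k - ε^2 * (p k * R r k ε) := by
      intro k
      rcases lt_or_ge k r with h|h
      · rw [hp0 k h]; ring
      · have hkey := key_identity r k hr h ε
        calc (1-ε) * (p k * g r k (1-ε)) = p k * ((1-ε) * g r k (1-ε)) := by ring
          _ = p k * (1 - ε^2 * R r k ε) := by rw [show (1-ε) * g r k (1-ε) = 1 - ε^2 * R r k ε by linarith]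
          _ = p k - ε^2 * (p k * R r k ε) := by ring
    rw [h1, tsum_congr h2, Summable.tsum_sub hPsum ((hSR ε hε).mul_left (ε^2)), hsum, hTdef]
    rw [← tsum_mul_left]
  -- main existence claim
  have hEx : ∃ ε ∈ Set.Ioo c 1, T ε ≤ (ε - c)/ε^2 := by
    by_contra hcon
    push_neg at hcon
    have hmeasR : ∀ k : ℕ, Measurable fun ε : ℝ => ENNReal.ofReal (p k * R r k ε) :=
      fun k => (continuous_const.mul (R_cont r k)).measurable.ennreal_ofReal
    have hnn2 : ∀ k : ℕ, 0 ≤ p k * ((k:ℝ)/((r:ℝ)-1) - 1) := by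
      intro k
      rcases lt_or_ge k r with h|h
      · rw [hp0 k h]; simp
      · refine mul_nonneg (hpnn k) ?_
        have : (r:ℝ) ≤ (k:ℝ) := by exact_mod_cast h
        rw [sub_nonneg, le_div_iff₀ hr1pos]
        linarith
    have hsum2 : Summable fun k : ℕ => p k * ((k:ℝ)/((r:ℝ)-1) - 1) := by
      refine ((hmean.mul_right (1/((r:ℝ)-1))).sub hPsum).congr fun k => ?_
      field_simp
    have htsum2 : ∑' k : ℕ, p k * ((k:ℝ)/((r:ℝ)-1) - 1) = b/((r:ℝ)-1) - 1 := by
      have h1 : ∑' k : ℕ, ((k:ℝ) * p k * (1/((r:ℝ)-1)) - p k)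
          = b/((r:ℝ)-1) - 1 := by
        rw [Summable.tsum_sub (hmean.mul_right _) hPsum, tsum_mul_right, hb, hsum, mul_one_div]
      rw [← h1]
      exact tsum_congr fun k => by field_simp
    have hint : ∀ k : ℕ, r ≤ k → (∫⁻ ε in Set.Ioc (0:ℝ) 1, ENNReal.ofReal (p k * R r k ε))
        = ENNReal.ofReal (p k * ((k:ℝ)/((r:ℝ)-1) - 1)) := by
      intro k hk
      rw [← MeasureTheory.ofReal_integral_eq_lintegral_ofReal (f := fun ε => p k * R r k ε)
        ((continuous_const.mul (R_cont r k)).integrableOn_Ioc)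
        ((ae_restrict_iff' measurableSet_Ioc).2 (Filter.Eventually.of_forall fun ε hε =>
          mul_nonneg (hpnn k) (R_nonneg r k ⟨le_of_lt hε.1, hε.2⟩)))]
      congr 1
      rw [← intervalIntegral.integral_of_le (by norm_num : (0:ℝ) ≤ 1),
        intervalIntegral.integral_const_mul, integral_R r k hr hk]
    have hTot : (∫⁻ ε in Set.Ioc (0:ℝ) 1, ∑' k : ℕ, ENNReal.ofReal (p k * R r k ε))
        = ENNReal.ofReal (b/((r:ℝ)-1) - 1) := by
      rw [MeasureTheory.lintegral_tsum (fun k => (hmeasR k).aemeasurable)]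
      have hterm : ∀ k : ℕ, (∫⁻ ε in Set.Ioc (0:ℝ) 1, ENNReal.ofReal (p k * R r k ε))
          = ENNReal.ofReal (p k * ((k:ℝ)/((r:ℝ)-1) - 1)) := by
        intro k
        rcases lt_or_ge k r with h|h
        · simp [hp0 k h]
        · exact hint k h
      rw [tsum_congr hterm, ← ENNReal.ofReal_tsum_of_nonneg hnn2 hsum2, htsum2]
    -- lower bound on the lintegral
    have hIoosub : Set.Ioo c 1 ⊆ Set.Ioc (0:ℝ) 1 :=
      fun x hx => ⟨lt_trans hcpos hx.1, le_of_lt hx.2⟩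
    have hval : (∫ ε in Set.Ioo c 1, (ε - c)/ε^2) = c - 1 - Real.log c := by
      rw [← MeasureTheory.integral_Ioc_eq_integral_Ioo,
        ← intervalIntegral.integral_of_le (le_of_lt hc1)]
      have hderiv : ∀ x ∈ Set.uIcc c 1, HasDerivAt (fun y : ℝ => Real.log y + c / y)
          ((x - c)/x^2) x := by
        intro x hx
        rw [Set.uIcc_of_le (le_of_lt hc1)] at hx
        have hx0 : 0 < x := lt_of_lt_of_le hcpos hx.1
        have h1 : HasDerivAt (fun y : ℝ => Real.log y + c / y)
            (x⁻¹ + c * (-(x^2)⁻¹)) x := by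
          refine (Real.hasDerivAt_log (ne_of_gt hx0)).add ?_
          exact ((hasDerivAt_inv (ne_of_gt hx0)).const_mul c).congr_of_eventuallyEq
            (Filter.Eventually.of_forall fun y => div_eq_mul_inv c y)
        have h2 : x⁻¹ + c * (-(x^2)⁻¹) = (x - c)/x^2 := by
          field_simp
          ring
        rwa [h2] at h1
      have hcont' : ContinuousOn (fun x : ℝ => (x - c)/x^2) (Set.uIcc c 1) := by
        rw [Set.uIcc_of_le (le_of_lt hc1)]
        refine ContinuousOn.div (by fun_prop) (by fun_prop) ?_
        intro x hx
        exact pow_ne_zero _ (ne_of_gt (lt_of_lt_of_le hcpos hx.1))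
      rw [intervalIntegral.integral_eq_sub_of_hasDerivAt hderiv hcont'.intervalIntegrable]
      simp only [Real.log_one]
      have hcne : c ≠ 0 := ne_of_gt hcpos
      field_simp
      ring
    have hIntble : IntegrableOn (fun ε : ℝ => (ε - c)/ε^2) (Set.Ioo c 1) := by
      refine (ContinuousOn.integrableOn_Icc ?_).mono_set Set.Ioo_subset_Icc_self
      refine ContinuousOn.div (by fun_prop) (by fun_prop) ?_
      intro x hx
      exact pow_ne_zero _ (ne_of_gt (lt_of_lt_of_le hcpos hx.1))
    have hLow : ENNReal.ofReal (c - 1 - Real.log c)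
        ≤ ∫⁻ ε in Set.Ioc (0:ℝ) 1, ∑' k : ℕ, ENNReal.ofReal (p k * R r k ε) := by
      refine le_trans ?_ (MeasureTheory.lintegral_mono_set hIoosub)
      rw [← hval, MeasureTheory.ofReal_integral_eq_lintegral_ofReal hIntble
        ((ae_restrict_iff' measurableSet_Ioo).2 (Filter.Eventually.of_forall fun ε hε =>
          div_nonneg (by linarith [hε.1]) (sq_nonneg ε)))]
      refine MeasureTheory.setLIntegral_mono (Measurable.ennreal_tsum hmeasR) ?_
      intro ε hε
      have hεIoc : ε ∈ Set.Ioc (0:ℝ) 1 := hIoosub hε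
      calc ENNReal.ofReal ((ε - c)/ε^2) ≤ ENNReal.ofReal (T ε) :=
            ENNReal.ofReal_le_ofReal (le_of_lt (hcon ε hε))
        _ = ∑' k : ℕ, ENNReal.ofReal (p k * R r k ε) :=
            ENNReal.ofReal_tsum_of_nonneg
              (fun k => mul_nonneg (hpnn k) (R_nonneg r k ⟨le_of_lt hεIoc.1, hεIoc.2⟩))
              (hSR ε hεIoc)
    rw [hTot] at hLow
    have hrhs : (0:ℝ) ≤ b/((r:ℝ)-1) - 1 := by
      rw [sub_nonneg, le_div_iff₀ hr1pos]
      linarith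
    have hle2 : c - 1 - Real.log c ≤ b/((r:ℝ)-1) - 1 :=
      (ENNReal.ofReal_le_ofReal_iff hrhs).1 hLow
    have hlogc : Real.log c = -(b + (r:ℝ) - 2)/((r:ℝ)-1) - Real.log b := by
      rw [hc, Real.log_div (Real.exp_ne_zero _) (ne_of_gt hbpos), Real.log_exp]
    have hlogb : 0 < Real.log b := Real.log_pos (by linarith)
    have hsplit : -(b + (r:ℝ) - 2)/((r:ℝ)-1) = -(b/((r:ℝ)-1)) - ((r:ℝ)-2)/((r:ℝ)-1) := by
      field_simp
      ring
    have hr2 : 0 ≤ ((r:ℝ)-2)/((r:ℝ)-1) := div_nonneg (by linarith) (le_of_lt hr1pos)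
    rw [hlogc, hsplit] at hle2
    linarith
  -- use the good ε
  obtain ⟨ε, hεmem, hTε⟩ := hEx
  obtain ⟨hcε, hε1⟩ := hεmem
  have hε0 : 0 < ε := lt_trans hcpos hcε
  have hεIoc : ε ∈ Set.Ioc (0:ℝ) 1 := ⟨hε0, le_of_lt hε1⟩
  have hx1 : (1-ε) ∈ Set.Icc (0:ℝ) 1 := ⟨by linarith, by linarith⟩
  have h1c : 0 < 1 - c := by linarith
  have h1ε : 0 < 1 - ε := by linarith
  have hG1 : 1/(1-c) ≤ G (1-ε) := by
    have hid := hGT ε hεIoc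
    have hε2T : ε^2 * T ε ≤ ε - c := by
      calc ε^2 * T ε ≤ ε^2 * ((ε - c)/ε^2) :=
            mul_le_mul_of_nonneg_left hTε (sq_nonneg ε)
        _ = ε - c := by field_simp
    have hlow : 1 - ε + c ≤ (1-ε) * G (1-ε) := by rw [hid]; linarith
    rw [div_le_iff₀ h1c]
    have h2 : (1 - ε + c) / (1 - ε) ≤ G (1-ε) := (div_le_iff₀ h1ε).2 (by linarith [hlow])
    have h3 : 1 / (1-c) ≤ (1 - ε + c) / (1 - ε) := by
      rw [div_le_div_iff₀ h1c h1ε]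
      nlinarith
    nlinarith [le_trans h3 h2]
  have hmemImg : G (1-ε) ∈ G '' Set.Icc (0:ℝ) 1 := ⟨1-ε, hx1, rfl⟩
  have hbdd : BddAbove (G '' Set.Icc (0:ℝ) 1) := by
    refine ⟨(r:ℝ), ?_⟩
    rintro y ⟨x, hx, rfl⟩
    calc G x ≤ ∑' k : ℕ, (r:ℝ) * p k :=
          Summable.tsum_le_tsum (hpg_le x hx) (hSg x hx) (hPsum.mul_left _)
      _ = (r:ℝ) * ∑' k : ℕ, p k := tsum_mul_left
      _ = (r:ℝ) := by rw [hsum, mul_one]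
  have hle : 1/(1-c) ≤ sSup (G '' Set.Icc (0:ℝ) 1) :=
    le_trans hG1 (le_csSup hbdd hmemImg)
  have hsuppos : 0 < sSup (G '' Set.Icc (0:ℝ) 1) :=
    lt_of_lt_of_le (one_div_pos.mpr h1c) hle
  have h1M : 1 / sSup (G '' Set.Icc (0:ℝ) 1) ≤ 1 - c := by
    calc 1 / sSup (G '' Set.Icc (0:ℝ) 1) ≤ 1 / (1/(1-c)) :=
          one_div_le_one_div_of_le (one_div_pos.mpr h1c) hle
      _ = 1 - c := one_div_one_div _
  have hexp : -((r:ℝ)-2)/((r:ℝ)-1) + -b/((r:ℝ)-1) = -(b+(r:ℝ)-2)/((r:ℝ)-1) := by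
    rw [← add_div]
    congr 1
    ring
  have hLHS : Real.exp (-((r : ℝ) - 2) / ((r : ℝ) - 1)) * Real.exp (-b / ((r : ℝ) - 1)) / b
      = c := by
    rw [hc, ← Real.exp_add, hexp]
  rw [hLHS]
  linarith
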